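/- In a dagger category, if f∂ : B ⟶ A is a †-Drazin inverse of f : A ⟶ B, then (f∂)† : A ⟶ B is a †-Drazin inverse of f† : B ⟶ A. -/
import Mathlib


open CategoryTheory

universe v u

/-- A dagger on a category: an identity-on-objects contravariant involution. -/
structure Dagger (C : Type u) [Category.{v} C] where
  dag : ∀ {X Y : C}, (X ⟶ Y) → (Y ⟶ X)
  dag_id : ∀ X : C, dag (𝟙 X) = 𝟙 X
  dag_comp : ∀ {X Y Z : C} (f : X ⟶ Y) (g : Y ⟶ Z), dag (f ≫ g) = dag g ≫ dag f
  dag_dag : ∀ {X Y : C} (f : X ⟶ Y), dag (dag f) = f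

/-- Iterated composition power of an endomorphism, with `cpow x 0 = 𝟙 A`. -/
def cpow {C : Type u} [Category.{v} C] {A : C} (x : A ⟶ A) : ℕ → (A ⟶ A)
  | 0 => 𝟙 A
  | n + 1 => cpow x n ≫ x

/-- `p` is a †-Drazin inverse of `f`. -/
def IsDagDrazinInv {C : Type u} [Category.{v} C] (D : Dagger C)
    {A B : C} (f : A ⟶ B) (p : B ⟶ A) : Prop :=
  (∃ k : ℕ, cpow (f ≫ D.dag f) k ≫ f ≫ p = cpow (f ≫ D.dag f) k ∧
    p ≫ f ≫ cpow (D.dag f ≫ f) k = cpow (D.dag f ≫ f) k) ∧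
  p ≫ f ≫ p = p ∧
  D.dag (f ≫ p) = f ≫ p ∧
  D.dag (p ≫ f) = p ≫ f

lemma cpow_comm {C : Type u} [Category.{v} C] {A : C} (x : A ⟶ A) (n : ℕ) :
    x ≫ cpow x n = cpow x n ≫ x := by
  induction n with
  | zero => simp [cpow]
  | succ n ih => simp [cpow, ← Category.assoc, ih]

lemma dag_cpow {C : Type u} [Category.{v} C] (D : Dagger C) {A : C} (x : A ⟶ A) (n : ℕ) :
    D.dag (cpow x n) = cpow (D.dag x) n := by
  induction n with
  | zero => simp [cpow, D.dag_id]
  | succ n ih => rw [cpow, D.dag_comp, ih, cpow, cpow_comm]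

/-- If `p` is a †-Drazin inverse of `f`, then `p†` is a †-Drazin inverse of `f†`. -/
theorem dagDrazinInv_dag {C : Type u} [Category.{v} C] (D : Dagger C)
    {A B : C} (f : A ⟶ B) (p : B ⟶ A) (h : IsDagDrazinInv D f p) :
    IsDagDrazinInv D (D.dag f) (D.dag p) := by
  obtain ⟨⟨k, h1a, h1b⟩, h2, h3, h4⟩ := h
  refine ⟨⟨k, ?_, ?_⟩, ?_, ?_, ?_⟩
  · rw [D.dag_dag]
    have := congrArg D.dag h1b
    rw [D.dag_comp, D.dag_comp, dag_cpow] at this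
    simpa [Category.assoc, D.dag_comp, D.dag_dag] using this
  · rw [D.dag_dag]
    have := congrArg D.dag h1a
    rw [D.dag_comp, D.dag_comp, dag_cpow] at this
    simpa [Category.assoc, D.dag_comp, D.dag_dag] using this
  · have := congrArg D.dag h2
    rw [D.dag_comp, D.dag_comp] at this
    simpa [Category.assoc] using this
  · rw [← D.dag_comp, D.dag_dag, h4]
  · rw [← D.dag_comp, D.dag_dag, h3]
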